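/- Let K be a field of characteristic ≠ 2 containing i with i² = −1, and let t₁ ∈ K with t₀ = t₁² such that the elliptic curve C₀ : y² = x(x−1)(x+t₀) is nonsingular. Set c₀ = i·t₁ and e₀ = t₁ + i. Then the point T₀ = (c₀, c₀e₀) lies on C₀, satisfies 2·T₀ = (0,0), and (0,0) is a point of order 2 on C₀. -/

import Mathlib

open WeierstrassCurve

private lemma some_congr {K : Type*} [Field K] {W : WeierstrassCurve.Affine K}
    {x y x' y' : K} (hx : x = x') (hy : y = y')
    (h : W.Nonsingular x y) (h' : W.Nonsingular x' y') :
    Affine.Point.some _ _ h = Affine.Point.some _ _ h' := by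
  subst hx; subst hy; rfl

open Classical in
/-- On `C₀ : y² = x(x−1)(x+t₀)` with `t₀ = t₁²`, the point
`T₀ = (c₀, c₀e₀)` with `c₀ = i·t₁`, `e₀ = t₁ + i` lies on the curve, doubles
to `(0,0)`, and `(0,0)` is a point of order `2`. -/
theorem weber_four_torsion_point (K : Type*) [Field K] (h2 : (2 : K) ≠ 0)
    (i t₁ : K) (hi : i ^ 2 = -1) :
    let t₀ : K := t₁ ^ 2
    let W : WeierstrassCurve.Affine K := ⟨0, t₀ - 1, 0, -t₀, 0⟩
    let c₀ : K := i * t₁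
    let e₀ : K := t₁ + i
    W.Δ ≠ 0 →
      ∃ (hT : W.Nonsingular c₀ (c₀ * e₀)) (hP : W.Nonsingular 0 0),
        (2 • (Affine.Point.some _ _ hT) = Affine.Point.some _ _ hP) ∧
        Affine.Point.some _ _ hP ≠ 0 ∧
        2 • (Affine.Point.some _ _ hP) = 0 := by
  intro t₀ W c₀ e₀ hΔ
  have hi0 : i ≠ 0 := by
    intro h; rw [h] at hi; simp at hi
  have hΔval : W.Δ = 16 * t₁ ^ 4 * ((t₁ + i) * (t₁ - i)) ^ 2 := by
    show (⟨0, t₀ - 1, 0, -t₀, 0⟩ : WeierstrassCurve.Affine K).Δ = _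
    simp only [WeierstrassCurve.Δ, b₂, b₄, b₆, b₈, t₀]
    linear_combination 16 * t₁ ^ 4 * (2 * t₁ ^ 2 + 1 - i ^ 2) * hi
  rw [hΔval] at hΔ
  have ht₁ : t₁ ≠ 0 := fun h => hΔ (by rw [h]; ring)
  have he₀ : e₀ ≠ 0 := fun h => hΔ (by
    show 16 * t₁ ^ 4 * ((t₁ + i) * (t₁ - i)) ^ 2 = 0
    rw [show t₁ + i = e₀ from rfl, h]; ring)
  have hc₀ : c₀ ≠ 0 := mul_ne_zero hi0 ht₁
  have heqT : W.Equation c₀ (c₀ * e₀) := by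
    rw [Affine.equation_iff]
    show (c₀ * e₀) ^ 2 + 0 * c₀ * (c₀ * e₀) + 0 * (c₀ * e₀)
        = c₀ ^ 3 + (t₀ - 1) * c₀ ^ 2 + -t₀ * c₀ + 0
    show (i * t₁ * (t₁ + i)) ^ 2 + 0 * (i * t₁) * (i * t₁ * (t₁ + i))
        + 0 * (i * t₁ * (t₁ + i))
        = (i * t₁) ^ 3 + (t₁ ^ 2 - 1) * (i * t₁) ^ 2 + -(t₁ ^ 2) * (i * t₁) + 0
    linear_combination (2 * i * t₁ ^ 3 + i ^ 2 * t₁ ^ 2 - i * t₁ ^ 3) * hi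
  have hT : W.Nonsingular c₀ (c₀ * e₀) := (Affine.equation_iff_nonsingular_of_Δ_ne_zero (W := W) (by rw [hΔval]; exact hΔ)).mp heqT
  have heqP : W.Equation (0 : K) 0 := by
    rw [Affine.equation_iff]
    show (0 : K) ^ 2 + 0 * 0 * 0 + 0 * 0 = 0 ^ 3 + (t₀ - 1) * 0 ^ 2 + -t₀ * 0 + 0
    ring
  have hP : W.Nonsingular (0 : K) 0 := (Affine.equation_iff_nonsingular_of_Δ_ne_zero (W := W) (by rw [hΔval]; exact hΔ)).mp heqP
  refine ⟨hT, hP, ?_, Affine.Point.some_ne_zero hP, ?_⟩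
  · have hne : c₀ * e₀ ≠ W.negY c₀ (c₀ * e₀) := by
      show c₀ * e₀ ≠ -(c₀ * e₀) - 0 * c₀ - 0
      intro h
      apply mul_ne_zero hc₀ he₀
      have : 2 * (c₀ * e₀) = 0 := by linear_combination h
      exact (mul_eq_zero.1 this).resolve_left h2
    have hden : c₀ * e₀ - W.negY c₀ (c₀ * e₀) ≠ 0 := sub_ne_zero.mpr hne
    have hslope : W.slope c₀ c₀ (c₀ * e₀) (c₀ * e₀) = e₀ := by
      rw [Affine.slope_of_Y_ne rfl hne, div_eq_iff hden]
      show 3 * c₀ ^ 2 + 2 * (t₀ - 1) * c₀ + -t₀ - 0 * (c₀ * e₀)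
          = e₀ * (c₀ * e₀ - (-(c₀ * e₀) - 0 * c₀ - 0))
      show 3 * (i * t₁) ^ 2 + 2 * (t₁ ^ 2 - 1) * (i * t₁) + -(t₁ ^ 2) - 0 * (i * t₁ * (t₁ + i))
          = (t₁ + i) * (i * t₁ * (t₁ + i) - (-(i * t₁ * (t₁ + i)) - 0 * (i * t₁) - 0))
      linear_combination (-t₁ ^ 2 - 2 * i * t₁) * hi
    rw [two_smul, Affine.Point.add_self_of_Y_ne hne]
    refine some_congr ?_ ?_ _ _
    · rw [Affine.addX, hslope]
      show e₀ ^ 2 + 0 * e₀ - (t₀ - 1) - c₀ - c₀ = 0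
      show (t₁ + i) ^ 2 + 0 * (t₁ + i) - (t₁ ^ 2 - 1) - i * t₁ - i * t₁ = 0
      linear_combination hi
    · rw [Affine.addY, Affine.negAddY, Affine.addX, hslope]
      show -((e₀ * (e₀ ^ 2 + 0 * e₀ - (t₀ - 1) - c₀ - c₀ - c₀) + c₀ * e₀))
          - 0 * (e₀ ^ 2 + 0 * e₀ - (t₀ - 1) - c₀ - c₀) - 0 = 0
      show -((t₁ + i) * ((t₁ + i) ^ 2 + 0 * (t₁ + i) - (t₁ ^ 2 - 1) - i * t₁ - i * t₁ - i * t₁)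
          + i * t₁ * (t₁ + i))
          - 0 * ((t₁ + i) ^ 2 + 0 * (t₁ + i) - (t₁ ^ 2 - 1) - i * t₁ - i * t₁) - 0 = 0
      linear_combination (-t₁ - i) * hi
  · rw [two_smul]
    exact Affine.Point.add_self_of_Y_eq (by show (0 : K) = -0 - 0 * 0 - 0; ring)
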